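/- Let M ≥ 5 and K ≥ 4 be integers. Then ∫₀^∞ x⁻¹ f_{M,4,K}(x) dx + ((M−1)/(M−2)) ∫₀^∞ x⁻¹ f_{M,3,K}(x) dx + ((M−1)/(M−3)) ∫₀^∞ x⁻¹ f_{M,2,K}(x) dx + ((M−1)/(M−4)) ∫₀^∞ x⁻¹ f_{M,1,K}(x) dx = ((M−1)/(M−4)) α_{M,K} + ((M−1)/(M−3)) [K α_{M,K−1} − (K−1) α_{M,K}] + ((M−1)/(M−2)) [ (K(K−1)/2) α_{M,K−2} − K(K−2) α_{M,K−1} + ((K−1)(K−2)/2) α_{M,K} ] + (K(K−1)(K−2)/6) α_{M,K−3} − (K(K−1)(K−3)/2) α_{M,K−2} + (K(K−2)(K−3)/2) α_{M,K−1} − ((K−1)(K−2)(K−3)/6) α_{M,K}. -/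

import Mathlib

open MeasureTheory ProbabilityTheory Filter

/-- Regularized lower incomplete gamma function `G(M,x) = (1/Γ(M)) ∫₀ˣ e^{-t} t^{M-1} dt`. -/
noncomputable def regGamma (M : ℕ) (x : ℝ) : ℝ :=
  (1 / Real.Gamma M) * ∫ t in (0:ℝ)..x, Real.exp (-t) * t ^ (M - 1)

/-- Gamma(M,1) density `g(M,x) = e^{-x} x^{M-1} / Γ(M)`. -/
noncomputable def gammaDens (M : ℕ) (x : ℝ) : ℝ :=
  Real.exp (-x) * x ^ (M - 1) / Real.Gamma M

/-- The constant `α_{M,K} = ∫₀^∞ K (e^{-x} x^{M-2} / Γ(M)) G(M,x)^{K-1} dx`. -/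
noncomputable def alphaMK (M K : ℕ) : ℝ :=
  ∫ x in Set.Ioi (0:ℝ), K * (Real.exp (-x) * x ^ (M - 2) / Real.Gamma M) * regGamma M x ^ (K - 1)

/-- Density `f_{M,r,K}` of the `r`-th largest among `K` i.i.d. Gamma(M,1) random variables. -/
noncomputable def fOrd (M r K : ℕ) (x : ℝ) : ℝ :=
  (K.factorial : ℝ) / ((K - r).factorial * (r - 1).factorial) *
    regGamma M x ^ (K - r) * (1 - regGamma M x) ^ (r - 1) * gammaDens M x

section AuxCorollary3
open Set

noncomputable def g0 (M : ℕ) (x : ℝ) : ℝ := Real.exp (-x) * x ^ (M - 2) / Real.Gamma M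

lemma continuous_regGamma (M : ℕ) : Continuous (regGamma M) := by
  unfold regGamma
  refine continuous_const.mul ?_
  exact intervalIntegral.continuous_primitive
    (fun a b => ((by continuity : Continuous fun t : ℝ => Real.exp (-t) * t ^ (M-1)).intervalIntegrable a b)) 0

lemma regGamma_nonneg (M : ℕ) {x : ℝ} (hx : 0 ≤ x) : 0 ≤ regGamma M x := by
  unfold regGamma
  refine mul_nonneg (by positivity) ?_
  refine intervalIntegral.integral_nonneg hx fun t ht => mul_nonneg (Real.exp_nonneg _) (pow_nonneg ht.1 _)

lemma npow_eq_rpow {x : ℝ} (hx : 0 < x) (n : ℕ) : x ^ n = x ^ (n : ℝ) := by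
  rw [Real.rpow_natCast]

lemma integrable_pow_exp (M : ℕ) (hM : 1 ≤ M) :
    IntegrableOn (fun t : ℝ => Real.exp (-t) * t ^ (M - 1)) (Ioi 0) := by
  have h1 : (0:ℝ) < (M:ℝ) := by exact_mod_cast Nat.lt_of_lt_of_le Nat.zero_lt_one hM
  refine (Real.GammaIntegral_convergent h1).congr_fun (fun t ht => ?_) measurableSet_Ioi
  have : ((M:ℝ) - 1) = ((M - 1 : ℕ) : ℝ) := by
    rw [Nat.cast_sub hM]; push_cast; ring
  rw [this]; simp only [Real.rpow_natCast]

lemma regGamma_le_one (M : ℕ) (hM : 1 ≤ M) {x : ℝ} (hx : 0 ≤ x) : regGamma M x ≤ 1 := by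
  have hMpos : (0:ℝ) < (M:ℝ) := by exact_mod_cast Nat.lt_of_lt_of_le Nat.zero_lt_one hM
  have hΓ : 0 < Real.Gamma M := Real.Gamma_pos_of_pos hMpos
  unfold regGamma
  rw [one_div, inv_mul_eq_div, div_le_one hΓ]
  have hΓeq : Real.Gamma M = ∫ t in Ioi (0:ℝ), Real.exp (-t) * t ^ (M - 1 : ℕ) := by
    rw [Real.Gamma_eq_integral hMpos]
    refine setIntegral_congr_fun measurableSet_Ioi fun t ht => ?_
    have : ((M:ℝ) - 1) = ((M - 1 : ℕ) : ℝ) := by rw [Nat.cast_sub hM]; push_cast; ring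
    rw [this, Real.rpow_natCast]
  rw [hΓeq, intervalIntegral.integral_of_le hx]
  refine setIntegral_mono_set (integrable_pow_exp M hM) ?_ ?_
  · exact (ae_restrict_mem measurableSet_Ioi).mono fun t ht =>
      mul_nonneg (Real.exp_nonneg _) (pow_nonneg (le_of_lt ht) _)
  · exact HasSubset.Subset.eventuallyLE Ioc_subset_Ioi_self

lemma integrable_g0 (M : ℕ) (hM : 2 ≤ M) : IntegrableOn (g0 M) (Ioi 0) := by
  have h1 : (0:ℝ) < (M:ℝ) - 1 := by
    have : (2:ℝ) ≤ (M:ℝ) := by exact_mod_cast hM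
    linarith
  have h : IntegrableOn (fun x => Real.exp (-x) * x ^ ((M:ℝ) - 1 - 1) / Real.Gamma M) (Ioi 0) :=
    (Real.GammaIntegral_convergent h1).div_const (Real.Gamma M)
  refine IntegrableOn.congr_fun h (fun t ht => ?_) measurableSet_Ioi
  have : ((M:ℝ) - 1 - 1) = ((M - 2 : ℕ) : ℝ) := by rw [Nat.cast_sub hM]; push_cast; ring
  rw [this, Real.rpow_natCast]; rfl

lemma g0_nonneg (M : ℕ) {x : ℝ} (hx : 0 ≤ x) : 0 ≤ g0 M x := by
  unfold g0
  exact div_nonneg (mul_nonneg (Real.exp_nonneg _) (pow_nonneg hx _))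
    (Real.Gamma_nonneg_of_nonneg (Nat.cast_nonneg M))

lemma integrable_H (M : ℕ) (hM : 2 ≤ M) (j : ℕ) :
    IntegrableOn (fun x => g0 M x * regGamma M x ^ j) (Ioi 0) := by
  refine (integrable_g0 M hM).mono' ?_ ?_
  · refine Continuous.aestronglyMeasurable ?_
    exact (by unfold g0; continuity : Continuous (g0 M)).mul ((continuous_regGamma M).pow j)
  · filter_upwards [ae_restrict_mem measurableSet_Ioi] with x hx
    have hG0 : 0 ≤ regGamma M x := regGamma_nonneg M (le_of_lt hx)
    have hG1 : regGamma M x ≤ 1 := regGamma_le_one M (by omega) (le_of_lt hx)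
    rw [Real.norm_eq_abs, abs_of_nonneg (mul_nonneg (g0_nonneg M (le_of_lt hx)) (pow_nonneg hG0 j))]
    exact mul_le_of_le_one_right (g0_nonneg M (le_of_lt hx)) (pow_le_one₀ hG0 hG1)

noncomputable def beta (M j : ℕ) : ℝ := ∫ x in Ioi (0:ℝ), g0 M x * regGamma M x ^ j

lemma alpha_eq (M J : ℕ) : alphaMK M J = J * _root_.beta M (J - 1) := by
  unfold alphaMK _root_.beta g0
  rw [← integral_const_mul]
  exact setIntegral_congr_fun measurableSet_Ioi fun x _ => by ring

lemma step1 (M : ℕ) (hM : 2 ≤ M) (r K : ℕ) :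
    ∫ x in Ioi (0:ℝ), x⁻¹ * fOrd M r K x
      = (K.factorial : ℝ) / ((K - r).factorial * (r - 1).factorial) *
        ∫ x in Ioi (0:ℝ), g0 M x * regGamma M x ^ (K - r) * (1 - regGamma M x) ^ (r - 1) := by
  have hΓ : (0:ℝ) < Real.Gamma M :=
    Real.Gamma_pos_of_pos (by exact_mod_cast Nat.lt_of_lt_of_le Nat.zero_lt_two hM)
  rw [← integral_const_mul]
  refine setIntegral_congr_fun measurableSet_Ioi fun x hx => ?_
  have hx0 : (x:ℝ) ≠ 0 := ne_of_gt hx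
  have hpow : x ^ (M - 1) = x ^ (M - 2) * x := by
    rw [← pow_succ]; congr 1; omega
  simp only [fOrd, gammaDens, g0, hpow]
  field_simp

lemma expand0 (M : ℕ) (a : ℕ) :
    ∫ x in Ioi (0:ℝ), g0 M x * regGamma M x ^ a * (1 - regGamma M x) ^ 0 = _root_.beta M a := by
  unfold _root_.beta; simp

lemma expand1 (M : ℕ) (hM : 2 ≤ M) (a : ℕ) :
    ∫ x in Ioi (0:ℝ), g0 M x * regGamma M x ^ a * (1 - regGamma M x) ^ 1
      = _root_.beta M a - _root_.beta M (a + 1) := by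
  unfold _root_.beta
  rw [← integral_sub (integrable_H M hM a) (integrable_H M hM (a+1))]
  exact setIntegral_congr_fun measurableSet_Ioi fun x _ => by ring

lemma expand2 (M : ℕ) (hM : 2 ≤ M) (a : ℕ) :
    ∫ x in Ioi (0:ℝ), g0 M x * regGamma M x ^ a * (1 - regGamma M x) ^ 2
      = _root_.beta M a - 2 * _root_.beta M (a + 1) + _root_.beta M (a + 2) := by
  unfold _root_.beta
  have h12 : Integrable (fun x => g0 M x * regGamma M x ^ a
      - 2 * (g0 M x * regGamma M x ^ (a + 1))) (volume.restrict (Ioi 0)) :=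
    (integrable_H M hM a).sub ((integrable_H M hM (a+1)).const_mul 2)
  rw [← integral_const_mul 2, ← integral_sub (integrable_H M hM a)
    ((integrable_H M hM (a+1)).const_mul 2),
    ← integral_add h12 (integrable_H M hM (a+2))]
  exact setIntegral_congr_fun measurableSet_Ioi fun x _ => by ring

lemma expand3 (M : ℕ) (hM : 2 ≤ M) (a : ℕ) :
    ∫ x in Ioi (0:ℝ), g0 M x * regGamma M x ^ a * (1 - regGamma M x) ^ 3
      = _root_.beta M a - 3 * _root_.beta M (a + 1) + 3 * _root_.beta M (a + 2) - _root_.beta M (a + 3) := by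
  unfold _root_.beta
  have h12 : Integrable (fun x => g0 M x * regGamma M x ^ a
      - 3 * (g0 M x * regGamma M x ^ (a + 1))) (volume.restrict (Ioi 0)) :=
    (integrable_H M hM a).sub ((integrable_H M hM (a+1)).const_mul 3)
  have h123 : Integrable (fun x => g0 M x * regGamma M x ^ a
      - 3 * (g0 M x * regGamma M x ^ (a + 1)) + 3 * (g0 M x * regGamma M x ^ (a + 2)))
      (volume.restrict (Ioi 0)) :=
    h12.add ((integrable_H M hM (a+2)).const_mul 3)
  rw [← integral_const_mul 3, ← integral_const_mul 3 fun x => g0 M x * regGamma M x ^ (a+2),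
    ← integral_sub (integrable_H M hM a) ((integrable_H M hM (a+1)).const_mul 3),
    ← integral_add h12 ((integrable_H M hM (a+2)).const_mul 3),
    ← integral_sub h123 (integrable_H M hM (a+3))]
  exact setIntegral_congr_fun measurableSet_Ioi fun x _ => by ring


end AuxCorollary3

set_option maxHeartbeats 2000000 in
/-- **Corollary 3 (NUS for 4 users).** Integral identity for the average minimum transmit
power `p_N(4)` when the four norm-strongest of `K` users are served (`M ≥ 5`, `K ≥ 4`). -/
theorem avg_min_power_NUS_four_users (M K : ℕ) (hM : 5 ≤ M) (hK : 4 ≤ K) :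
    (∫ x in Set.Ioi (0:ℝ), x⁻¹ * fOrd M 4 K x) +
      (((M : ℝ) - 1) / ((M : ℝ) - 2) * ∫ x in Set.Ioi (0:ℝ), x⁻¹ * fOrd M 3 K x) +
      (((M : ℝ) - 1) / ((M : ℝ) - 3) * ∫ x in Set.Ioi (0:ℝ), x⁻¹ * fOrd M 2 K x) +
      (((M : ℝ) - 1) / ((M : ℝ) - 4) * ∫ x in Set.Ioi (0:ℝ), x⁻¹ * fOrd M 1 K x)
    = ((M : ℝ) - 1) / ((M : ℝ) - 4) * alphaMK M K
      + ((M : ℝ) - 1) / ((M : ℝ) - 3) *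
          ((K : ℝ) * alphaMK M (K - 1) - ((K : ℝ) - 1) * alphaMK M K)
      + ((M : ℝ) - 1) / ((M : ℝ) - 2) *
          ((K : ℝ) * ((K : ℝ) - 1) / 2 * alphaMK M (K - 2)
            - (K : ℝ) * ((K : ℝ) - 2) * alphaMK M (K - 1)
            + ((K : ℝ) - 1) * ((K : ℝ) - 2) / 2 * alphaMK M K)
      + ((K : ℝ) * ((K : ℝ) - 1) * ((K : ℝ) - 2) / 6 * alphaMK M (K - 3)
          - (K : ℝ) * ((K : ℝ) - 1) * ((K : ℝ) - 3) / 2 * alphaMK M (K - 2)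
          + (K : ℝ) * ((K : ℝ) - 2) * ((K : ℝ) - 3) / 2 * alphaMK M (K - 1)
          - ((K : ℝ) - 1) * ((K : ℝ) - 2) * ((K : ℝ) - 3) / 6 * alphaMK M K) := by
  obtain ⟨k, rfl⟩ : ∃ k, K = k + 4 := ⟨K - 4, by omega⟩
  have hM2 : 2 ≤ M := by omega
  rw [step1 M hM2 1, step1 M hM2 2, step1 M hM2 3, step1 M hM2 4]
  simp only [show k + 4 - 1 = k + 3 by omega, show k + 4 - 2 = k + 2 by omega,
    show k + 4 - 3 = k + 1 by omega, show k + 4 - 4 = k by omega,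
    show (1:ℕ) - 1 = 0 by omega, show (2:ℕ) - 1 = 1 by omega,
    show (3:ℕ) - 1 = 2 by omega, show (4:ℕ) - 1 = 3 by omega]
  rw [expand0 M (k+3), expand1 M hM2 (k+2), expand2 M hM2 (k+1), expand3 M hM2 k,
    alpha_eq M (k+4), alpha_eq M (k+3), alpha_eq M (k+2), alpha_eq M (k+1)]
  simp only [show k + 4 - 1 = k + 3 by omega, show k + 3 - 1 = k + 2 by omega,
    show k + 2 - 1 = k + 1 by omega, show k + 1 - 1 = k by omega,
    show k + 2 + 1 = k + 3 by omega, show k + 1 + 1 = k + 2 by omega,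
    show k + 1 + 2 = k + 3 by omega, Nat.factorial_zero, Nat.factorial_one,
    show Nat.factorial 2 = 2 from rfl, show Nat.factorial 3 = 6 from rfl]
  have f1 : ((k+1).factorial : ℝ) = ((k:ℝ)+1) * k.factorial := by
    rw [Nat.factorial_succ]; push_cast; ring
  have f2 : ((k+2).factorial : ℝ) = ((k:ℝ)+2) * (k+1).factorial := by
    rw [show k+2 = (k+1)+1 by omega, Nat.factorial_succ]; push_cast; ring
  have f3 : ((k+3).factorial : ℝ) = ((k:ℝ)+3) * (k+2).factorial := by
    rw [show k+3 = (k+2)+1 by omega, Nat.factorial_succ]; push_cast; ring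
  have f4 : ((k+4).factorial : ℝ) = ((k:ℝ)+4) * (k+3).factorial := by
    rw [show k+4 = (k+3)+1 by omega, Nat.factorial_succ]; push_cast; ring
  rw [f4, f3, f2, f1]
  have hk0 : ((k.factorial : ℝ)) ≠ 0 := by
    exact_mod_cast k.factorial_ne_zero
  push_cast
  generalize ((M:ℝ) - 1) / ((M:ℝ) - 2) = q2
  generalize ((M:ℝ) - 1) / ((M:ℝ) - 3) = q3
  generalize ((M:ℝ) - 1) / ((M:ℝ) - 4) = q4
  field_simp
  ring
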